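/- For every odd integer d ≥ 3 there exist integers a, b, c with a² + b² + c² = 3d² such that not all of |a|, |b|, |c| equal |d| (i.e., a nontrivial solution exists). -/
import Mathlib

private lemma cancel_helper (d e f g : ℤ) (hodd : Odd d) (hd : 0 ≤ d)
    (he : |e| = |d|) (hf : |f| = |d|) (hef : e + f = 4 * g) : g = 0 := by
  rw [abs_of_nonneg hd] at he hf
  obtain he := (abs_eq hd).mp he
  obtain hf := (abs_eq hd).mp hf
  obtain ⟨k, hk⟩ := hodd
  rcases he with h | h <;> rcases hf with h' | h' <;> omega


private lemma square_facts (d m : ℤ) (hm0 : 0 ≤ m) (hmd : d = m ^ 2) (hodd : Odd d)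
    (hd : 3 ≤ d) : Odd m ∧ 3 ≤ m ∧ m.natAbs < d.natAbs := by
  have hmodd : Odd m := by
    have hsq : Odd (m ^ 2) := hmd ▸ hodd
    rcases Int.even_or_odd m with he | ho
    · exact absurd hsq (Int.not_odd_iff_even.mpr (Int.even_pow.mpr ⟨he, two_ne_zero⟩))
    · exact ho
  have hm2 : 2 ≤ m := by
    rcases Int.lt_or_le m 2 with h | h
    · exfalso
      have h01 : m = 0 ∨ m = 1 := by omega
      rcases h01 with h0 | h0 <;> rw [h0] at hmd <;> norm_num at hmd <;> omega
    · exact h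
  have hm3 : 3 ≤ m := by obtain ⟨k, hk⟩ := hmodd; omega
  have hmm : m * 2 ≤ m * m := by nlinarith
  have hmlt : m < d := by rw [hmd, sq]; linarith
  exact ⟨hmodd, hm3, by omega⟩

private lemma scale_sol (d m a b c : ℤ) (hm0 : 0 ≤ m) (hmd : d = m ^ 2) (hmne : m ≠ 0)
    (hsum : a ^ 2 + b ^ 2 + c ^ 2 = 3 * m ^ 2)
    (hnt : ¬(|a| = |m| ∧ |b| = |m| ∧ |c| = |m|)) :
    ∃ a' b' c' : ℤ, a' ^ 2 + b' ^ 2 + c' ^ 2 = 3 * d ^ 2 ∧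
      ¬(|a'| = |d| ∧ |b'| = |d| ∧ |c'| = |d|) := by
  refine ⟨m * a, m * b, m * c, ?_, ?_⟩
  · have h : (m*a)^2 + (m*b)^2 + (m*c)^2 = m^2 * (a^2 + b^2 + c^2) := by ring
    rw [h, hsum, hmd]; ring
  · rintro ⟨h1, h2, h3⟩
    apply hnt
    have habs : ∀ t : ℤ, |m * t| = |d| → |t| = |m| := by
      intro t ht
      rw [abs_mul, hmd, sq, abs_mul] at ht
      exact mul_left_cancel₀ (abs_ne_zero.mpr hmne) ht
    exact ⟨habs a h1, habs b h2, habs c h3⟩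

private lemma key : ∀ n : ℕ, ∀ d : ℤ, d.natAbs ≤ n → Odd d → 3 ≤ d →
    ∃ a b c : ℤ, a ^ 2 + b ^ 2 + c ^ 2 = 3 * d ^ 2 ∧
      ¬(|a| = |d| ∧ |b| = |d| ∧ |c| = |d|) := by
  intro n
  induction n with
  | zero => intro d h _ hd; omega
  | succ n ih =>
    intro d hle hodd hd
    have hd0 : (0:ℤ) ≤ d := by linarith
    obtain ⟨W, X, Y, Z, hfour⟩ := Nat.sum_four_squares d.toNat
    set w := (W:ℤ) with hw'
    set x := (X:ℤ) with hx'
    set y := (Y:ℤ) with hy'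
    set z := (Z:ℤ) with hz'
    have hN : w ^ 2 + x ^ 2 + y ^ 2 + z ^ 2 = d := by
      have h := congrArg (Nat.cast : ℕ → ℤ) hfour
      push_cast at h
      rwa [Int.toNat_of_nonneg hd0] at h
    set M11 := w^2 + x^2 - y^2 - z^2 with hM11
    set M12 := 2*(x*y - w*z) with hM12
    set M13 := 2*(x*z + w*y) with hM13
    set M21 := 2*(x*y + w*z) with hM21
    set M22 := w^2 - x^2 + y^2 - z^2 with hM22
    set M23 := 2*(y*z - w*x) with hM23
    set M31 := 2*(x*z - w*y) with hM31
    set M32 := 2*(y*z + w*x) with hM32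
    set M33 := w^2 - x^2 - y^2 + z^2 with hM33
    set A1 := M11 + M12 + M13 with hA1
    set A2 := M21 + M22 + M23 with hA2
    set A3 := M31 + M32 + M33 with hA3
    set B1 := M11 - M12 - M13 with hB1
    set B2 := M21 - M22 - M23 with hB2
    set B3 := M31 - M32 - M33 with hB3
    set C1 := -M11 + M12 - M13 with hC1
    set C2 := -M21 + M22 - M23 with hC2
    set C3 := -M31 + M32 - M33 with hC3
    set D1 := -M11 - M12 + M13 with hD1
    set D2 := -M21 - M22 + M23 with hD2
    set D3 := -M31 - M32 + M33 with hD3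
    have sA : A1 ^ 2 + A2 ^ 2 + A3 ^ 2 = 3 * d ^ 2 := by
      rw [hA1, hA2, hA3, hM11, hM12, hM13, hM21, hM22, hM23, hM31, hM32, hM33, ← hN]; ring
    have sB : B1 ^ 2 + B2 ^ 2 + B3 ^ 2 = 3 * d ^ 2 := by
      rw [hB1, hB2, hB3, hM11, hM12, hM13, hM21, hM22, hM23, hM31, hM32, hM33, ← hN]; ring
    have sC : C1 ^ 2 + C2 ^ 2 + C3 ^ 2 = 3 * d ^ 2 := by
      rw [hC1, hC2, hC3, hM11, hM12, hM13, hM21, hM22, hM23, hM31, hM32, hM33, ← hN]; ring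
    have sD : D1 ^ 2 + D2 ^ 2 + D3 ^ 2 = 3 * d ^ 2 := by
      rw [hD1, hD2, hD3, hM11, hM12, hM13, hM21, hM22, hM23, hM31, hM32, hM33, ← hN]; ring
    by_cases hA : |A1| = |d| ∧ |A2| = |d| ∧ |A3| = |d|
    swap
    · exact ⟨A1, A2, A3, sA, hA⟩
    by_cases hB : |B1| = |d| ∧ |B2| = |d| ∧ |B3| = |d|
    swap
    · exact ⟨B1, B2, B3, sB, hB⟩
    by_cases hC : |C1| = |d| ∧ |C2| = |d| ∧ |C3| = |d|
    swap
    · exact ⟨C1, C2, C3, sC, hC⟩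
    by_cases hD : |D1| = |d| ∧ |D2| = |d| ∧ |D3| = |d|
    swap
    · exact ⟨D1, D2, D3, sD, hD⟩
    -- all four trivial: derive that d is a perfect square
    have g1 : x*y + w*z = 0 := by
      refine cancel_helper d A2 B2 _ hodd hd0 hA.2.1 hB.2.1 ?_
      rw [hA2, hB2, hM21]; ring
    have g2 : x*z - w*y = 0 := by
      refine cancel_helper d A3 B3 _ hodd hd0 hA.2.2 hB.2.2 ?_
      rw [hA3, hB3, hM31]; ring
    have g3 : x*y - w*z = 0 := by
      refine cancel_helper d A1 C1 _ hodd hd0 hA.1 hC.1 ?_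
      rw [hA1, hC1, hM12]; ring
    have g4 : y*z + w*x = 0 := by
      refine cancel_helper d A3 C3 _ hodd hd0 hA.2.2 hC.2.2 ?_
      rw [hA3, hC3, hM32]; ring
    have g5 : x*z + w*y = 0 := by
      refine cancel_helper d A1 D1 _ hodd hd0 hA.1 hD.1 ?_
      rw [hA1, hD1, hM13]; ring
    have g6 : y*z - w*x = 0 := by
      refine cancel_helper d A2 D2 _ hodd hd0 hA.2.1 hD.2.1 ?_
      rw [hA2, hD2, hM23]; ring
    have hxy : x*y = 0 := by linarith
    have hwz : w*z = 0 := by linarith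
    have hxz : x*z = 0 := by linarith
    have hwy : w*y = 0 := by linarith
    have hyz : y*z = 0 := by linarith
    have hwx : w*x = 0 := by linarith
    have hw0 : (0:ℤ) ≤ w := Int.natCast_nonneg W
    have hx0 : (0:ℤ) ≤ x := Int.natCast_nonneg X
    have hy0 : (0:ℤ) ≤ y := Int.natCast_nonneg Y
    have hz0 : (0:ℤ) ≤ z := Int.natCast_nonneg Z
    have hm : ∃ m : ℤ, 0 ≤ m ∧ d = m ^ 2 := by
      rcases eq_or_ne w 0 with hw | hw
      · rcases eq_or_ne x 0 with hx | hx
        · rcases eq_or_ne y 0 with hy | hy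
          · exact ⟨z, hz0, by rw [← hN, hw, hx, hy]; ring⟩
          · have hz : z = 0 := (mul_eq_zero.mp hyz).resolve_left hy
            exact ⟨y, hy0, by rw [← hN, hw, hx, hz]; ring⟩
        · have hy : y = 0 := (mul_eq_zero.mp hxy).resolve_left hx
          have hz : z = 0 := (mul_eq_zero.mp hxz).resolve_left hx
          exact ⟨x, hx0, by rw [← hN, hw, hy, hz]; ring⟩
      · have hx : x = 0 := (mul_eq_zero.mp hwx).resolve_left hw
        have hy : y = 0 := (mul_eq_zero.mp hwy).resolve_left hw
        have hz : z = 0 := (mul_eq_zero.mp hwz).resolve_left hw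
        exact ⟨w, hw0, by rw [← hN, hx, hy, hz]; ring⟩
    obtain ⟨m, hm0, hmd⟩ := hm
    have facts := square_facts d m hm0 hmd hodd hd
    obtain ⟨a, b, c, hsum, hnt⟩ := ih m (by omega) facts.1 facts.2.1
    exact scale_sol d m a b c hm0 hmd (by omega) hsum hnt

/-- For every odd integer `d ≥ 3` there is a nontrivial solution of
`a²+b²+c² = 3d²`. -/
theorem nontrivial_solution_exists (d : ℤ) (hodd : Odd d) (hd : 3 ≤ d) :
    ∃ a b c : ℤ, a ^ 2 + b ^ 2 + c ^ 2 = 3 * d ^ 2 ∧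
      ¬(|a| = |d| ∧ |b| = |d| ∧ |c| = |d|) := by
  exact key d.natAbs d le_rfl hodd hd
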